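/- For the rectangle [0, L] × [0, 1] with L > 0 and any n points on its boundary, there exists a polygonal path passing through all n points of total length at most L + 2n + 2. -/

import Mathlib

lemma dist_le_coords (x y : EuclideanSpace ℝ (Fin 2)) :
    dist x y ≤ |x 0 - y 0| + |x 1 - y 1| := by
  rw [EuclideanSpace.dist_eq]
  have h1 : ∑ i : Fin 2, dist (x i) (y i) ^ 2
      = (x 0 - y 0) ^ 2 + (x 1 - y 1) ^ 2 := by
    simp [Fin.sum_univ_two, Real.dist_eq, sq_abs]
  rw [h1]
  have h2 : (x 0 - y 0) ^ 2 + (x 1 - y 1) ^ 2 ≤ (|x 0 - y 0| + |x 1 - y 1|) ^ 2 := by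
    nlinarith [abs_nonneg (x 0 - y 0), abs_nonneg (x 1 - y 1),
      sq_abs (x 0 - y 0), sq_abs (x 1 - y 1)]
  calc Real.sqrt ((x 0 - y 0) ^ 2 + (x 1 - y 1) ^ 2)
      ≤ Real.sqrt ((|x 0 - y 0| + |x 1 - y 1|) ^ 2) := Real.sqrt_le_sqrt h2
    _ = |x 0 - y 0| + |x 1 - y 1| :=
        Real.sqrt_sq (by positivity)

/-- For the rectangle `[0, L] × [0, 1]` (`L > 0`) and any `n` points on its boundary,
there is an ordering of the points (a permutation `σ`) such that the polygonal path
through them in this order has total length at most `L + 2n + 2`. -/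
theorem stmt14 (L : ℝ) (hL : 0 < L) (n : ℕ)
    (p : Fin n → EuclideanSpace ℝ (Fin 2))
    (hp : ∀ i, p i ∈ frontier {x : EuclideanSpace ℝ (Fin 2) |
      x 0 ∈ Set.Icc 0 L ∧ x 1 ∈ Set.Icc (0 : ℝ) 1}) :
    ∃ σ : Equiv.Perm (Fin n),
      (∑ i : Fin n, if h : (i : ℕ) + 1 < n
        then dist (p (σ i)) (p (σ ⟨(i : ℕ) + 1, h⟩)) else 0) ≤ L + 2 * n + 2 := by
  -- points lie in the (closed) rectangle
  have hclosed : IsClosed {x : EuclideanSpace ℝ (Fin 2) |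
      x 0 ∈ Set.Icc 0 L ∧ x 1 ∈ Set.Icc (0 : ℝ) 1} := by
    have c0 : Continuous fun x : EuclideanSpace ℝ (Fin 2) => x 0 :=
      (EuclideanSpace.proj (0 : Fin 2)).continuous
    have c1 : Continuous fun x : EuclideanSpace ℝ (Fin 2) => x 1 :=
      (EuclideanSpace.proj (1 : Fin 2)).continuous
    exact (isClosed_Icc.preimage c0).inter (isClosed_Icc.preimage c1)
  have hmem : ∀ i, p i 0 ∈ Set.Icc 0 L ∧ p i 1 ∈ Set.Icc (0 : ℝ) 1 := fun i =>
    hclosed.frontier_subset (hp i)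
  rcases Nat.eq_zero_or_pos n with hn | hn
  · subst hn
    exact ⟨1, by simp; positivity⟩
  -- sort by x-coordinate
  set σ : Equiv.Perm (Fin n) := Tuple.sort (fun i => p i 0) with hσ
  have hmono : Monotone ((fun i => p i 0) ∘ σ) := Tuple.monotone_sort _
  refine ⟨σ, ?_⟩
  have hle : ∀ k, min k (n - 1) < n := fun k =>
    lt_of_le_of_lt (min_le_right _ _) (Nat.sub_lt hn one_pos)
  set G : ℕ → ℝ := fun k => p (σ ⟨min k (n - 1), hle k⟩) 0 with hG
  set F : ℕ → ℝ := fun k =>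
    if h : k + 1 < n then dist (p (σ ⟨k, Nat.lt_of_succ_lt h⟩)) (p (σ ⟨k + 1, h⟩)) else 0
    with hF
  have hsum : (∑ i : Fin n, if h : (i : ℕ) + 1 < n
      then dist (p (σ i)) (p (σ ⟨(i : ℕ) + 1, h⟩)) else 0) = ∑ k ∈ Finset.range n, F k := by
    rw [Finset.sum_range fun k => F k]
  rw [hsum]
  have hbound : ∀ k ∈ Finset.range n,
      F k ≤ (G (k + 1) - G k) + (if k + 1 < n then (1 : ℝ) else 0) := by
    intro k _
    simp only [hF]
    split
    · rename_i h
      have hk : k < n - 1 := by omega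
      have hmin1 : min k (n - 1) = k := by omega
      have hmin2 : min (k + 1) (n - 1) = k + 1 := by omega
      have hGk : G k = p (σ ⟨k, Nat.lt_of_succ_lt h⟩) 0 := by
        simp only [hG]; exact congrArg (fun j => p (σ j) 0) (Fin.ext hmin1)
      have hGk1 : G (k + 1) = p (σ ⟨k + 1, h⟩) 0 := by
        simp only [hG]; exact congrArg (fun j => p (σ j) 0) (Fin.ext hmin2)
      have hx : p (σ ⟨k, Nat.lt_of_succ_lt h⟩) 0 ≤ p (σ ⟨k + 1, h⟩) 0 :=
        hmono (by simp [Fin.le_def])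
      have hy1 := (hmem (σ ⟨k, Nat.lt_of_succ_lt h⟩)).2
      have hy2 := (hmem (σ ⟨k + 1, h⟩)).2
      have := dist_le_coords (p (σ ⟨k, Nat.lt_of_succ_lt h⟩)) (p (σ ⟨k + 1, h⟩))
      rw [hGk, hGk1]
      simp only [Set.mem_Icc] at hy1 hy2
      have habs : |p (σ ⟨k, Nat.lt_of_succ_lt h⟩) 1 - p (σ ⟨k + 1, h⟩) 1| ≤ 1 := by
        rw [abs_sub_le_iff]; constructor <;> linarith [hy1.1, hy1.2, hy2.1, hy2.2]
      have habsx : |p (σ ⟨k, Nat.lt_of_succ_lt h⟩) 0 - p (σ ⟨k + 1, h⟩) 0|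
          = p (σ ⟨k + 1, h⟩) 0 - p (σ ⟨k, Nat.lt_of_succ_lt h⟩) 0 := by
        rw [abs_sub_comm, abs_of_nonneg (by linarith)]
      rw [habsx] at this
      linarith
    · rename_i h
      have hk : n - 1 ≤ k := by omega
      have hmin1 : min k (n - 1) = n - 1 := by omega
      have hmin2 : min (k + 1) (n - 1) = n - 1 := by omega
      have : G (k + 1) = G k := by
        simp only [hG]; exact congrArg (fun j => p (σ j) 0) (Fin.ext (hmin2.trans hmin1.symm))
      rw [this]
      simp
  calc ∑ k ∈ Finset.range n, F k
      ≤ ∑ k ∈ Finset.range n, ((G (k + 1) - G k) + (if k + 1 < n then (1 : ℝ) else 0)) :=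
        Finset.sum_le_sum hbound
    _ = (G n - G 0) + ∑ k ∈ Finset.range n, (if k + 1 < n then (1 : ℝ) else 0) := by
        rw [Finset.sum_add_distrib, Finset.sum_range_sub G n]
    _ ≤ (G n - G 0) + ∑ k ∈ Finset.range n, (1 : ℝ) := by
        gcongr with k
        split <;> norm_num
    _ = (G n - G 0) + n := by simp
    _ ≤ L + 2 * n + 2 := by
        have h1 := (hmem (σ ⟨min n (n - 1), hle n⟩)).1
        have h2 := (hmem (σ ⟨min 0 (n - 1), hle 0⟩)).1
        simp only [Set.mem_Icc] at h1 h2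
        have : (n : ℝ) ≥ 0 := Nat.cast_nonneg n
        simp only [hG]
        linarith [h1.2, h2.1]
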